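/- arXiv:1801.06682 — 3 statements merged into one kernel-verified Lean document; each statement's English description precedes it below -/
import Mathlib

section
/- Let f(p) = log₂(1 + a·p) − log₂(1 + b·p) for a > b > 0. Then f is concave on [0, ∞). -/
open Real Set

lemma aux_hasDerivAt_log (c p : ℝ) (h : 0 < 1 + c * p) :
    HasDerivAt (fun x : ℝ => Real.log (1 + c * x)) (c / (1 + c * p)) p := by
  have h1 : HasDerivAt (fun x : ℝ => 1 + c * x) c p := by
    simpa using ((hasDerivAt_id p).const_mul c).const_add 1
  have := (Real.hasDerivAt_log h.ne').comp p h1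
  simpa [div_eq_inv_mul, Function.comp_def] using this

lemma aux_hasDerivAt_frac (c p : ℝ) (h : 0 < 1 + c * p) :
    HasDerivAt (fun x : ℝ => c / (1 + c * x)) (-(c ^ 2) / (1 + c * p) ^ 2) p := by
  have h1 : HasDerivAt (fun x : ℝ => 1 + c * x) c p := by
    simpa using ((hasDerivAt_id p).const_mul c).const_add 1
  have := (h1.inv h.ne').const_mul c
  have e : (fun x : ℝ => c / (1 + c * x)) = fun y => c * (fun x => 1 + c * x)⁻¹ y := by
    funext x
    simp [div_eq_mul_inv]
  rw [e]
  exact this.congr_deriv (by ring)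

theorem stmt_2 (a b : ℝ) (hb : 0 < b) (hab : b < a) :
    ConcaveOn ℝ (Set.Ici 0)
      (fun p : ℝ => Real.logb 2 (1 + a * p) - Real.logb 2 (1 + b * p)) := by
  have ha : 0 < a := hb.trans hab
  set g : ℝ → ℝ := fun p => Real.log (1 + a * p) - Real.log (1 + b * p) with hgdef
  have hpos : ∀ c : ℝ, 0 < c → ∀ p : ℝ, 0 ≤ p → 0 < 1 + c * p := fun c hc p hp => by
    nlinarith
  have hg : ConcaveOn ℝ (Set.Ici 0) g := by
    have hint : interior (Set.Ici (0 : ℝ)) = Set.Ioi 0 := interior_Ici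
    have hderiv : ∀ p ∈ Set.Ioi (0 : ℝ),
        HasDerivAt g (a / (1 + a * p) - b / (1 + b * p)) p := by
      intro p hp
      exact (aux_hasDerivAt_log a p (hpos a ha p hp.le)).sub
        (aux_hasDerivAt_log b p (hpos b hb p hp.le))
    have hderiv_eq : Set.EqOn (deriv g)
        (fun p => a / (1 + a * p) - b / (1 + b * p)) (Set.Ioi 0) := by
      intro p hp
      exact (hderiv p hp).deriv
    apply concaveOn_of_deriv2_nonpos (convex_Ici 0)
    · -- continuity
      apply ContinuousOn.sub
      · exact (Real.continuousOn_log.comp (by fun_prop)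
          (fun p hp => (hpos a ha p hp).ne')).congr (fun p hp => rfl)
      · exact (Real.continuousOn_log.comp (by fun_prop)
          (fun p hp => (hpos b hb p hp).ne')).congr (fun p hp => rfl)
    · rw [hint]
      intro p hp
      exact (hderiv p hp).differentiableAt.differentiableWithinAt
    · rw [hint]
      intro p hp
      have heq : deriv g =ᶠ[nhds p] (fun p => a / (1 + a * p) - b / (1 + b * p)) :=
        Filter.eventuallyEq_of_mem (isOpen_Ioi.mem_nhds hp) hderiv_eq
      have h2 : HasDerivAt (fun p => a / (1 + a * p) - b / (1 + b * p))
          (-(a ^ 2) / (1 + a * p) ^ 2 - -(b ^ 2) / (1 + b * p) ^ 2) p :=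
        (aux_hasDerivAt_frac a p (hpos a ha p hp.le)).sub
          (aux_hasDerivAt_frac b p (hpos b hb p hp.le))
      exact ((h2.congr_of_eventuallyEq heq).differentiableAt).differentiableWithinAt
    · rw [hint]
      intro p hp
      have heq : deriv g =ᶠ[nhds p] (fun p => a / (1 + a * p) - b / (1 + b * p)) :=
        Filter.eventuallyEq_of_mem (isOpen_Ioi.mem_nhds hp) hderiv_eq
      have h2 : HasDerivAt (fun p => a / (1 + a * p) - b / (1 + b * p))
          (-(a ^ 2) / (1 + a * p) ^ 2 - -(b ^ 2) / (1 + b * p) ^ 2) p :=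
        (aux_hasDerivAt_frac a p (hpos a ha p hp.le)).sub
          (aux_hasDerivAt_frac b p (hpos b hb p hp.le))
      simp only [Function.iterate_succ, Function.iterate_zero, Function.comp_apply, id_eq]
      rw [heq.deriv_eq, h2.deriv]
      have hA := hpos a ha p hp.le
      have hB := hpos b hb p hp.le
      have key : b / (1 + b * p) ≤ a / (1 + a * p) := by
        rw [div_le_div_iff₀ hB hA]
        nlinarith
      have key2 : (b / (1 + b * p)) ^ 2 ≤ (a / (1 + a * p)) ^ 2 :=
        pow_le_pow_left₀ (div_nonneg hb.le hB.le) key 2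
      have hb2 : b ^ 2 / (1 + b * p) ^ 2 ≤ a ^ 2 / (1 + a * p) ^ 2 := by
        simpa [div_pow] using key2
      rw [neg_div, neg_div]
      linarith
  have hsmul := hg.smul (c := (Real.log 2)⁻¹)
    (by positivity)
  have hfun : (fun p : ℝ => Real.logb 2 (1 + a * p) - Real.logb 2 (1 + b * p)) =
      fun x => (Real.log 2)⁻¹ • g x := by
    funext p
    simp [Real.logb, g, sub_div, div_eq_inv_mul, mul_sub]
  rw [hfun]
  exact hsmul
end

section
/- For a > b > 0 and λ > 0 with λ·ln 2 < a − b appropriately, the stationary point of f(p) = [log₂(1 + a·p) − log₂(1 + b·p)] − λ·p over p > 0 is p̂ = √((1/(2b) − 1/(2a))² + (1/(λ ln 2))(1/b − 1/a)) − 1/(2b) − 1/(2a); that is, f'(p̂) = 0. -/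
theorem stmt_3 (a b lam : ℝ) (hb : 0 < b) (hab : b < a) (hlam : 0 < lam)
    (hcond : lam * Real.log 2 < a - b)
    (phat : ℝ)
    (hphat : phat =
      Real.sqrt ((1 / (2 * b) - 1 / (2 * a)) ^ 2 +
        (1 / (lam * Real.log 2)) * (1 / b - 1 / a)) - 1 / (2 * b) - 1 / (2 * a)) :
    a / ((1 + a * phat) * Real.log 2) - b / ((1 + b * phat) * Real.log 2) - lam = 0 := by
  have ha : 0 < a := hb.trans hab
  have hL : 0 < Real.log 2 := Real.log_pos (by norm_num)
  obtain ⟨E, hE⟩ : ∃ E, E = (1 / (2 * b) - 1 / (2 * a)) ^ 2 +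
      (1 / (lam * Real.log 2)) * (1 / b - 1 / a) := ⟨_, rfl⟩
  rw [← hE] at hphat
  have hdpos : 0 < 1 / (2 * b) - 1 / (2 * a) := by
    have : 1 / (2 * a) < 1 / (2 * b) := by
      apply one_div_lt_one_div_of_lt <;> nlinarith
    linarith
  have hpos : 0 < (1 / (lam * Real.log 2)) * (1 / b - 1 / a) := by
    apply mul_pos (by positivity)
    have : 1 / a < 1 / b := one_div_lt_one_div_of_lt hb hab
    linarith
  have hEpos : 0 < E := by rw [hE]; positivity
  have hs : Real.sqrt E ^ 2 = E := Real.sq_sqrt hEpos.le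
  have hsd : 1 / (2 * b) - 1 / (2 * a) < Real.sqrt E := by
    have h1 : 1 / (2 * b) - 1 / (2 * a) = Real.sqrt ((1 / (2 * b) - 1 / (2 * a)) ^ 2) :=
      (Real.sqrt_sq hdpos.le).symm
    rw [h1]
    apply Real.sqrt_lt_sqrt (by positivity)
    rw [hE]; linarith
  have hp : phat > -(1 / a) := by
    rw [hphat]
    have h2 : -(1 / a) = (1 / (2 * b) - 1 / (2 * a)) - 1 / (2 * b) - 1 / (2 * a) := by ring
    rw [h2]; linarith
  have h1a : 0 < 1 + a * phat := by
    have h := mul_lt_mul_of_pos_left hp ha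
    rw [mul_neg, mul_one_div, div_self ha.ne'] at h
    linarith
  have h1b : 0 < 1 + b * phat := by
    have hpb : phat > -(1 / b) := by
      have : 1 / a ≤ 1 / b := (one_div_lt_one_div_of_lt hb hab).le
      linarith
    have h := mul_lt_mul_of_pos_left hpb hb
    rw [mul_neg, mul_one_div, div_self hb.ne'] at h
    linarith
  have key : (1 + a * phat) * (1 + b * phat) * (lam * Real.log 2) = a - b := by
    have hs3 : (4 * a ^ 2 * b ^ 2 * lam * Real.log 2) * Real.sqrt E ^ 2
        = lam * Real.log 2 * (a - b) ^ 2 + 4 * a * b * (a - b) := by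
      rw [hs, hE]
      field_simp
      ring
    rw [hphat]
    field_simp
    linear_combination hs3
  have hne1 : (1 + a * phat) * Real.log 2 ≠ 0 := by positivity
  have hne2 : (1 + b * phat) * Real.log 2 ≠ 0 := by positivity
  rw [div_sub_div _ _ hne1 hne2, sub_eq_zero, div_eq_iff (mul_ne_zero hne1 hne2)]
  linear_combination (-Real.log 2) * key
end

section
/- If ζ is exponentially distributed with unit mean and c > 0, then E[log₂(1 + c·ζ)] = e^{1/c}·E₁(1/c)/ln 2, where E₁ is the exponential integral, and this value is strictly less than log₂(1 + c). -/
open MeasureTheory Real Set Filter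

theorem stmt_16 (c : ℝ) (hc : 0 < c) :
    (∫ z in Set.Ioi (0:ℝ), Real.logb 2 (1 + c * z) * Real.exp (-z)) =
      Real.exp (1 / c) * (∫ t in Set.Ioi (1 / c), Real.exp (-t) / t) / Real.log 2 ∧
    (∫ z in Set.Ioi (0:ℝ), Real.logb 2 (1 + c * z) * Real.exp (-z)) <
      Real.logb 2 (1 + c) := by
  have hlog2 : (0:ℝ) < Real.log 2 := Real.log_pos one_lt_two
  have ha : (0:ℝ) < 1 / c := by positivity
  have hpos : ∀ z : ℝ, 0 ≤ z → 0 < 1 + c * z := fun z hz => by nlinarith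
  -- basic integrabilities
  have hIexp : IntegrableOn (fun z : ℝ => Real.exp (-z)) (Set.Ioi 0) := by
    simpa using exp_neg_integrableOn_Ioi 0 one_pos
  have hIzexp : IntegrableOn (fun z : ℝ => z * Real.exp (-z)) (Set.Ioi 0) := by
    have h := Real.GammaIntegral_convergent (by norm_num : (0:ℝ) < 2)
    refine h.congr_fun (fun x hx => ?_) measurableSet_Ioi
    simp only [show (2:ℝ) - 1 = 1 by norm_num, Real.rpow_one]; ring
  have hIlog : IntegrableOn (fun z : ℝ => Real.log (1 + c * z) * Real.exp (-z))
      (Set.Ioi 0) := by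
    refine Integrable.mono' (g := fun z => c * (z * Real.exp (-z)))
      (hIzexp.const_mul c) ?_ ?_
    · refine (ContinuousOn.mul ?_ (by fun_prop)).aestronglyMeasurable measurableSet_Ioi
      exact ContinuousOn.log (by fun_prop) fun z hz => (hpos z (le_of_lt hz)).ne'
    · rw [ae_restrict_iff' measurableSet_Ioi]
      refine Filter.Eventually.of_forall fun z hz => ?_
      have hz0 : (0:ℝ) < z := hz
      have h1 : 0 ≤ Real.log (1 + c * z) :=
        Real.log_nonneg (by nlinarith)
      have h2 : Real.log (1 + c * z) ≤ c * z := by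
        have := Real.log_le_sub_one_of_pos (hpos z hz0.le)
        linarith
      rw [Real.norm_eq_abs, abs_of_nonneg (by positivity : 0 ≤ Real.log (1 + c * z) * Real.exp (-z))]
      show Real.log (1 + c * z) * Real.exp (-z) ≤ c * (z * Real.exp (-z))
      nlinarith [mul_le_mul_of_nonneg_right h2 (Real.exp_pos (-z)).le]
  have hIrec : IntegrableOn (fun z : ℝ => Real.exp (-z) * (c / (1 + c * z)))
      (Set.Ioi 0) := by
    refine Integrable.mono' (g := fun z => c * Real.exp (-z)) (hIexp.const_mul c) ?_ ?_
    · refine (ContinuousOn.mul (by fun_prop) (ContinuousOn.div continuousOn_const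
        (by fun_prop) fun z hz => (hpos z (le_of_lt hz)).ne')).aestronglyMeasurable
        measurableSet_Ioi
    · rw [ae_restrict_iff' measurableSet_Ioi]
      refine Filter.Eventually.of_forall fun z hz => ?_
      have hz0 : (0:ℝ) < z := hz
      have h1 : (0:ℝ) < 1 + c * z := hpos z hz0.le
      have h2 : c / (1 + c * z) ≤ c := by
        rw [div_le_iff₀ h1]; nlinarith [mul_pos (mul_pos hc hc) hz0]
      have h3 : 0 ≤ c / (1 + c * z) := by positivity
      rw [Real.norm_eq_abs, abs_of_nonneg (by positivity)]
      show Real.exp (-z) * (c / (1 + c * z)) ≤ c * Real.exp (-z)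
      nlinarith [mul_le_mul_of_nonneg_left h2 (Real.exp_pos (-z)).le]
  -- integration by parts: ∫ log(1+cz) e^{-z} = ∫ e^{-z} c/(1+cz)
  set L : ℝ := ∫ z in Set.Ioi (0:ℝ), Real.log (1 + c * z) * Real.exp (-z) with hL
  have hibp : L = ∫ z in Set.Ioi (0:ℝ), Real.exp (-z) * (c / (1 + c * z)) := by
    have hderiv : ∀ x ∈ Set.Ici (0:ℝ),
        HasDerivAt (fun z => -(Real.exp (-z) * Real.log (1 + c * z)))
          (Real.log (1 + c * x) * Real.exp (-x) - Real.exp (-x) * (c / (1 + c * x))) x := by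
      intro x hx
      have hx0 : (0:ℝ) ≤ x := hx
      have hne : 1 + c * x ≠ 0 := (hpos x hx0).ne'
      have he : HasDerivAt (fun z : ℝ => Real.exp (-z)) (-Real.exp (-x)) x := by
        convert (hasDerivAt_neg x).exp using 1; ring
      have hin : HasDerivAt (fun z : ℝ => 1 + c * z) c x := by
        simpa using ((hasDerivAt_id x).const_mul c).const_add 1
      have hl : HasDerivAt (fun z : ℝ => Real.log (1 + c * z)) (c / (1 + c * x)) x :=
        hin.log hne
      have := (he.mul hl).neg
      refine this.congr_deriv ?_
      ring
    have hint : IntegrableOn (fun x : ℝ =>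
        Real.log (1 + c * x) * Real.exp (-x) - Real.exp (-x) * (c / (1 + c * x)))
        (Set.Ioi 0) := hIlog.sub hIrec
    have htend : Filter.Tendsto (fun z => -(Real.exp (-z) * Real.log (1 + c * z)))
        Filter.atTop (nhds 0) := by
      have hzexp : Filter.Tendsto (fun z : ℝ => c * (z * Real.exp (-z)))
          Filter.atTop (nhds 0) := by
        have := (Real.tendsto_pow_mul_exp_neg_atTop_nhds_zero 1).const_mul c
        simpa using this
      have hsq : Filter.Tendsto (fun z : ℝ => Real.exp (-z) * Real.log (1 + c * z))
          Filter.atTop (nhds 0) := by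
        refine tendsto_of_tendsto_of_tendsto_of_le_of_le' tendsto_const_nhds hzexp ?_ ?_
        · filter_upwards [Filter.eventually_ge_atTop (0:ℝ)] with z hz
          have := Real.log_nonneg (by nlinarith : (1:ℝ) ≤ 1 + c * z)
          positivity
        · filter_upwards [Filter.eventually_ge_atTop (0:ℝ)] with z hz
          have h2 : Real.log (1 + c * z) ≤ c * z := by
            have := Real.log_le_sub_one_of_pos (hpos z hz)
            linarith
          have := (Real.exp_pos (-z)).le
          nlinarith
      simpa using hsq.neg
    have := integral_Ioi_of_hasDerivAt_of_tendsto' hderiv hint htend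
    simp only [mul_zero, Real.exp_zero, Real.log_one, neg_zero, one_mul, mul_one,
      sub_zero, zero_sub, neg_neg] at this
    have h0 : (∫ x in Set.Ioi (0:ℝ),
        (Real.log (1 + c * x) * Real.exp (-x) - Real.exp (-x) * (c / (1 + c * x)))) = 0 := by
      rw [this]; norm_num
    rw [integral_sub hIlog hIrec] at h0
    have := sub_eq_zero.mp h0
    simpa [hL] using this
  -- substitution
  have hsub : (∫ t in Set.Ioi (1/c), Real.exp (-t) / t)
      = Real.exp (-(1/c)) * ∫ z in Set.Ioi (0:ℝ), Real.exp (-z) * (c / (1 + c * z)) := by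
    have h := (MeasurableEquiv.addRight (1/c)).measurableEmbedding.setIntegral_map
      (μ := volume) (fun t => Real.exp (-t) / t) (Set.Ioi (1/c))
    have hm : Measure.map (⇑(MeasurableEquiv.addRight (1/c))) volume = volume := by
      simpa [MeasurableEquiv.addRight] using map_add_right_eq_self (volume : Measure ℝ) (1/c)
    rw [hm] at h
    have hpre : (⇑(MeasurableEquiv.addRight (1/c))) ⁻¹' Set.Ioi (1/c) = Set.Ioi 0 := by
      ext x; simp [MeasurableEquiv.addRight]
    rw [hpre] at h
    rw [h, ← integral_const_mul]
    refine setIntegral_congr_fun measurableSet_Ioi fun z hz => ?_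
    have hz0 : (0:ℝ) < z := hz
    have h1 : (0:ℝ) < 1 + c * z := hpos z hz0.le
    have h2 : MeasurableEquiv.addRight (1/c) z = z + 1/c := rfl
    rw [h2, neg_add, Real.exp_add]
    have h3 : z + 1/c ≠ 0 := by positivity
    field_simp
    ring
  -- the main integral in terms of L
  have hmain : (∫ z in Set.Ioi (0:ℝ), Real.logb 2 (1 + c * z) * Real.exp (-z))
      = L / Real.log 2 := by
    rw [hL, ← integral_div]
    refine setIntegral_congr_fun measurableSet_Ioi fun z hz => ?_
    rw [Real.logb]
    ring
  constructor
  · rw [hmain, hibp]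
    rw [hsub, ← mul_assoc, ← Real.exp_add]
    simp
  · -- strict inequality
    set k : ℝ := c / (1 + c) with hk
    have h1c : (0:ℝ) < 1 + c := by linarith
    -- ∫ (log(1+c) + k (z-1)) e^{-z} = log(1+c)
    have hA : (∫ z in Set.Ioi (0:ℝ), (Real.log (1 + c) + k * (z - 1)) * Real.exp (-z))
        = Real.log (1 + c) := by
      have hderiv : ∀ x ∈ Set.Ici (0:ℝ),
          HasDerivAt (fun z => -(Real.log (1 + c) * Real.exp (-z)) - k * (z * Real.exp (-z)))
            ((Real.log (1 + c) + k * (x - 1)) * Real.exp (-x)) x := by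
        intro x _
        have he : HasDerivAt (fun z : ℝ => Real.exp (-z)) (-Real.exp (-x)) x := by
          convert (hasDerivAt_neg x).exp using 1; ring
        have h2 : HasDerivAt (fun z : ℝ => z * Real.exp (-z))
            (Real.exp (-x) + x * -Real.exp (-x)) x := by
          exact ((hasDerivAt_id' x).mul he).congr_deriv (by ring)
        have := ((he.const_mul (Real.log (1 + c))).neg).sub (h2.const_mul k)
        refine this.congr_deriv ?_
        ring
      have hint : IntegrableOn (fun x : ℝ =>
          (Real.log (1 + c) + k * (x - 1)) * Real.exp (-x)) (Set.Ioi 0) := by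
        have h := ((hIexp.const_mul (Real.log (1 + c))).add (hIzexp.const_mul k)).sub
          (hIexp.const_mul k)
        refine h.congr (Filter.Eventually.of_forall fun z => ?_)
        simp only [Pi.add_apply, Pi.sub_apply]
        ring
      have htend : Filter.Tendsto
          (fun z => -(Real.log (1 + c) * Real.exp (-z)) - k * (z * Real.exp (-z)))
          Filter.atTop (nhds 0) := by
        have h1 := (Real.tendsto_exp_neg_atTop_nhds_zero.const_mul (Real.log (1 + c))).neg
        have h2 := (Real.tendsto_pow_mul_exp_neg_atTop_nhds_zero 1).const_mul k
        simp only [pow_one] at h2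
        simpa using h1.sub h2
      have := integral_Ioi_of_hasDerivAt_of_tendsto' hderiv hint htend
      rw [this]
      simp
    -- φ nonneg, positive on Ioi 1
    have hphi_int : IntegrableOn (fun z : ℝ =>
        (Real.log (1 + c) + k * (z - 1) - Real.log (1 + c * z)) * Real.exp (-z))
        (Set.Ioi 0) := by
      have h := (((hIexp.const_mul (Real.log (1 + c))).add (hIzexp.const_mul k)).sub
        (hIexp.const_mul k)).sub hIlog
      refine h.congr (Filter.Eventually.of_forall fun z => ?_)
      simp only [Pi.add_apply, Pi.sub_apply]
      ring
    have hphi_le : ∀ z : ℝ, 0 < z →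
        Real.log (1 + c * z) - Real.log (1 + c) ≤ k * (z - 1) := by
      intro z hz
      have h1 : (0:ℝ) < 1 + c * z := hpos z hz.le
      have h2 := Real.log_le_sub_one_of_pos (show (0:ℝ) < (1 + c * z) / (1 + c) by positivity)
      rw [Real.log_div h1.ne' h1c.ne'] at h2
      have h3 : (1 + c * z) / (1 + c) - 1 = k * (z - 1) := by
        rw [hk]; field_simp; ring
      linarith [h3 ▸ h2]
    have hphi_pos : 0 < ∫ z in Set.Ioi (0:ℝ),
        (Real.log (1 + c) + k * (z - 1) - Real.log (1 + c * z)) * Real.exp (-z) := by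
      have hnn : 0 ≤ᵐ[volume.restrict (Set.Ioi (0:ℝ))] fun z : ℝ =>
          (Real.log (1 + c) + k * (z - 1) - Real.log (1 + c * z)) * Real.exp (-z) := by
        refine (ae_restrict_iff' measurableSet_Ioi).mpr (Filter.Eventually.of_forall fun z hz => ?_)
        have h1 := hphi_le z hz
        have h2 := (Real.exp_pos (-z)).le
        have h3 : 0 ≤ Real.log (1 + c) + k * (z - 1) - Real.log (1 + c * z) := by linarith
        positivity
      rw [setIntegral_pos_iff_support_of_nonneg_ae hnn hphi_int]
      · refine lt_of_lt_of_le ?_ (measure_mono (show Set.Ioi (2:ℝ) ⊆ _ from ?_))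
        · rw [Real.volume_Ioi]; exact ENNReal.zero_lt_top
        · intro z hz
          have hz2 : (2:ℝ) < z := hz
          have hz0 : (0:ℝ) < z := by linarith
          constructor
          · -- z ∈ support φ
            have h1 : (0:ℝ) < 1 + c * z := hpos z hz0.le
            have hne : (1 + c * z) / (1 + c) ≠ 1 := by
              intro h
              have := (div_eq_one_iff_eq h1c.ne').mp h
              nlinarith
            have h2 := Real.log_lt_sub_one_of_pos
              (show (0:ℝ) < (1 + c * z) / (1 + c) by positivity) hne
            rw [Real.log_div h1.ne' h1c.ne'] at h2
            have h3 : (1 + c * z) / (1 + c) - 1 = k * (z - 1) := by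
              rw [hk]; field_simp; ring
            rw [h3] at h2
            have h4 : 0 < Real.log (1 + c) + k * (z - 1) - Real.log (1 + c * z) := by
              linarith
            have h5 : (0:ℝ) < Real.exp (-z) := Real.exp_pos _
            simp only [Function.mem_support]
            positivity
          · exact hz0
    have hsplit : (∫ z in Set.Ioi (0:ℝ),
        (Real.log (1 + c) + k * (z - 1) - Real.log (1 + c * z)) * Real.exp (-z))
        = (∫ z in Set.Ioi (0:ℝ), (Real.log (1 + c) + k * (z - 1)) * Real.exp (-z)) - L := by
      rw [hL, ← integral_sub ?_ hIlog]
      · refine setIntegral_congr_fun measurableSet_Ioi fun z hz => ?_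
        ring
      · have h := ((hIexp.const_mul (Real.log (1 + c))).add (hIzexp.const_mul k)).sub
          (hIexp.const_mul k)
        refine h.congr (Filter.Eventually.of_forall fun z => ?_)
        simp only [Pi.add_apply, Pi.sub_apply]
        ring
    rw [hsplit, hA] at hphi_pos
    have hLlt : L < Real.log (1 + c) := by linarith
    rw [hmain, Real.logb]
    exact (div_lt_div_iff_of_pos_right hlog2).mpr hLlt
end
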